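/- Let α > −1, let q ≥ 0 be an integer, and let n ≥ 1 be an integer. Suppose G is a monic polynomial of degree 2n with real coefficients such that ∫_{−1}^{1} |x|^{2q+2} (1−x²)^α x^k G(x) dx = 0 for all integers 0 ≤ k ≤ 2n−1. Then G(x) = Σ_{k=0}^{n} [(−n)_k (−n−q−1/2)_k / (k! (−2n−α−q−1/2)_k)] x^{2n−2k} for all real x. -/

import Mathlib

open MeasureTheory intervalIntegral Polynomial
set_option maxHeartbeats 1000000

/-- Pochhammer symbol `(a)_k = a (a+1) ⋯ (a+k-1)`. -/
noncomputable def poch (a : ℝ) (k : ℕ) : ℝ := ∏ i ∈ Finset.range k, (a + i)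

/-- `Peven α q n x = P_{2n}^{α,q}(x)`, the monic generalized Gegenbauer-type polynomial
`Σ_{k=0}^{n} (−n)_k (−n−q−1/2)_k / (k! (−2n−α−q−1/2)_k) x^{2n−2k}`. -/
noncomputable def Peven (α : ℝ) (q n : ℕ) (x : ℝ) : ℝ :=
  ∑ k ∈ Finset.range (n + 1),
    poch (-(n : ℝ)) k * poch (-(n : ℝ) - q - 1/2) k /
      ((Nat.factorial k : ℝ) * poch (-(2 * (n : ℝ)) - α - q - 1/2) k) * x ^ (2*n - 2*k)

/-- `Podd α q n x = P_{2n+1}^{α,q}(x) = (1+x) P_{2n}^{α+1,q}(x)`. -/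
noncomputable def Podd (α : ℝ) (q n : ℕ) (x : ℝ) : ℝ := (1 + x) * Peven (α + 1) q n x

/-- `P α q n x = P_n^{α,q}(x)`. -/
noncomputable def P (α : ℝ) (q : ℕ) (n : ℕ) (x : ℝ) : ℝ :=
  if Even n then Peven α q (n / 2) x else Podd α q (n / 2) x

namespace GGaux

lemma poch_zero (a : ℝ) : poch a 0 = 1 := by simp [poch]

lemma poch_succ (a : ℝ) (k : ℕ) : poch a (k+1) = poch a k * (a + k) :=
  Finset.prod_range_succ _ _

lemma poch_ne_zero {a : ℝ} {k : ℕ} (h : ∀ i < k, a + i ≠ 0) : poch a k ≠ 0 :=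
  Finset.prod_ne_zero_iff.mpr (fun i hi => h i (Finset.mem_range.mp hi))

/-- the coefficient in `Peven`. -/
noncomputable def cc (α : ℝ) (q n k : ℕ) : ℝ :=
  poch (-(n : ℝ)) k * poch (-(n : ℝ) - q - 1/2) k /
      ((Nat.factorial k : ℝ) * poch (-(2 * (n : ℝ)) - α - q - 1/2) k)

lemma cc_zero (α : ℝ) (q n : ℕ) : cc α q n 0 = 1 := by
  simp [cc, poch_zero]

lemma base_ne_zero {α : ℝ} (hα : -1 < α) (q n : ℕ) {k : ℕ} (hk : k ≤ n) (hn : 1 ≤ n) :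
    poch (-(2 * (n : ℝ)) - α - q - 1/2) k ≠ 0 := by
  apply poch_ne_zero
  intro i hi
  have h1 : (i : ℝ) < n := by exact_mod_cast lt_of_lt_of_le hi hk
  have h2 : (1 : ℝ) ≤ n := by exact_mod_cast hn
  have h3 : (0 : ℝ) ≤ q := Nat.cast_nonneg q
  nlinarith

lemma cc_succ {α : ℝ} (hα : -1 < α) (q n : ℕ) {k : ℕ} (hk : k < n) :
    cc α q n (k+1) = cc α q n k *
      (((-(n : ℝ) + k) * (-(n : ℝ) - q - 1/2 + k)) /
        (((k : ℝ) + 1) * (-(2 * (n : ℝ)) - α - q - 1/2 + k))) := by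
  have hn : 1 ≤ n := by omega
  have hfac : (Nat.factorial k : ℝ) ≠ 0 := by exact_mod_cast (Nat.factorial_ne_zero k)
  have hb : poch (-(2 * (n : ℝ)) - α - q - 1/2) k ≠ 0 := base_ne_zero hα q n hk.le hn
  have hfactor : (-(2 * (n : ℝ)) - α - q - 1/2 + k) ≠ 0 := by
    have h1 : (k : ℝ) < n := by exact_mod_cast hk
    have h2 : (1 : ℝ) ≤ n := by exact_mod_cast hn
    have h3 : (0 : ℝ) ≤ q := Nat.cast_nonneg q
    nlinarith
  have hk1 : ((k : ℝ) + 1) ≠ 0 := by positivity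
  simp only [cc, poch_succ, Nat.factorial_succ]
  push_cast
  field_simp

lemma cc_rec {α : ℝ} (hα : -1 < α) (q n : ℕ) {k : ℕ} (hk : k < n) :
    cc α q n k * ((n : ℝ) - k) * (((n : ℝ) - k) + ((q : ℝ) + 1/2))
      + cc α q n (k+1) * ((k : ℝ) + 1)
        * ((2*(n : ℝ) - 1 - k) + (α + ((q : ℝ) + 1/2) + 1)) = 0 := by
  have hn : 1 ≤ n := by omega
  have hfactor : (-(2 * (n : ℝ)) - α - q - 1/2 + k) ≠ 0 := by
    have h1 : (k : ℝ) < n := by exact_mod_cast hk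
    have h2 : (1 : ℝ) ≤ n := by exact_mod_cast hn
    have h3 : (0 : ℝ) ≤ q := Nat.cast_nonneg q
    nlinarith
  have hk1 : ((k : ℝ) + 1) ≠ 0 := by positivity
  have hM : (((k : ℝ) + 1) * (-(2 * (n : ℝ)) - α - q - 1/2 + k)) ≠ 0 :=
    mul_ne_zero hk1 hfactor
  have hNMZ : (-(n : ℝ) + k) * (-(n : ℝ) - q - 1/2 + k) /
        (((k : ℝ) + 1) * (-(2 * (n : ℝ)) - α - q - 1/2 + k)) *
        (((k : ℝ) + 1) * ((2*(n : ℝ) - 1 - k) + (α + ((q : ℝ) + 1/2) + 1)))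
      = -(((n : ℝ) - k) * (((n : ℝ) - k) + ((q : ℝ) + 1/2))) := by
    rw [div_mul_eq_mul_div, div_eq_iff hM]; ring
  rw [cc_succ hα q n hk]
  linear_combination cc α q n k * hNMZ

/-- the polynomial `p(t) = ∑ c_k t^(n-k)`. -/
noncomputable def pp (α : ℝ) (q n : ℕ) : Polynomial ℝ :=
  ∑ k ∈ Finset.range (n+1), C (cc α q n k) * X ^ (n - k)

lemma pp_eval (α : ℝ) (q n : ℕ) (t : ℝ) :
    (pp α q n).eval t = ∑ k ∈ Finset.range (n+1), cc α q n k * t ^ (n - k) := by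
  simp [pp, eval_finset_sum]

lemma term_eq (j : ℕ) (a B S lam t : ℝ) :
    t*(1-t) * (a * (j:ℝ) * ((j-1:ℕ):ℝ) * t^(j-1-1)) + (B - S*t) * (a * (j:ℝ) * t^(j-1))
      + lam * (a * t^j)
    = a * (((j:ℝ) * ((j:ℝ) - 1 + B)) * t^(j-1)
        + (lam - (j:ℝ)*((j:ℝ) - 1) - S*(j:ℝ)) * t^j) := by
  match j with
  | 0 => simp; ring
  | 1 => simp; ring
  | (m+2) =>
    simp only [Nat.succ_sub_one]
    push_cast
    ring

lemma pp_ode (α : ℝ) (hα : -1 < α) (q n : ℕ) (hn : 1 ≤ n) (t : ℝ) :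
    t * (1 - t) * ((pp α q n).derivative.derivative.eval t)
      + ((((q:ℝ)+1/2) + 1) - (α + ((q:ℝ)+1/2) + 2) * t) * ((pp α q n).derivative.eval t)
      + ((n:ℝ) * ((n:ℝ) + α + ((q:ℝ)+1/2) + 1)) * ((pp α q n).eval t) = 0 := by
  set β : ℝ := (q:ℝ) + 1/2 with hβ
  set s : ℝ := α + β + 1 with hs
  set lam : ℝ := (n:ℝ) * ((n:ℝ) + α + β + 1) with hlam
  have hder : (pp α q n).derivative
      = ∑ k ∈ Finset.range (n+1), C (cc α q n k * ((n-k : ℕ):ℝ)) * X ^ (n-k-1) := by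
    rw [pp, derivative_sum]
    refine Finset.sum_congr rfl fun k _ => ?_
    rw [derivative_C_mul_X_pow]
  have hder2 : (pp α q n).derivative.derivative
      = ∑ k ∈ Finset.range (n+1),
          C (cc α q n k * ((n-k:ℕ):ℝ) * ((n-k-1:ℕ):ℝ)) * X ^ (n-k-1-1) := by
    rw [hder, derivative_sum]
    refine Finset.sum_congr rfl fun k _ => ?_
    rw [derivative_C_mul_X_pow]
  have step1 : t * (1 - t) * ((pp α q n).derivative.derivative.eval t)
      + ((β + 1) - (α + β + 2) * t) * ((pp α q n).derivative.eval t)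
      + lam * ((pp α q n).eval t)
      = ∑ k ∈ Finset.range (n+1), (cc α q n k *
          ((((n-k:ℕ):ℝ) * (((n-k:ℕ):ℝ) + β)) * t^(n-k-1)
            + (lam - ((n-k:ℕ):ℝ) * (((n-k:ℕ):ℝ) + s)) * t^(n-k))) := by
    rw [hder2, hder, pp]
    simp only [eval_finset_sum, eval_mul, eval_C, eval_pow, eval_X, Finset.mul_sum]
    rw [← Finset.sum_add_distrib, ← Finset.sum_add_distrib]
    refine Finset.sum_congr rfl fun k _ => ?_
    linear_combination term_eq (n-k) (cc α q n k) (β+1) (α+β+2) lam t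
  rw [step1]
  simp only [mul_add]
  rw [Finset.sum_add_distrib, Finset.sum_range_succ, Finset.sum_range_succ']
  have hAn : cc α q n n * ((((n-n:ℕ):ℝ) * ((n-n:ℕ):ℝ) + ((n-n:ℕ):ℝ) * β) * t^(n-n-1)) = 0 := by
    simp
  have hB0 : cc α q n 0 * ((lam - (((n-0:ℕ):ℝ) * ((n-0:ℕ):ℝ) + ((n-0:ℕ):ℝ) * s)) * t^(n-0)) = 0 := by
    simp only [Nat.sub_zero]
    rw [hlam, hs]
    ring
  rw [hAn, hB0, add_zero, add_zero, ← Finset.sum_add_distrib]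
  apply Finset.sum_eq_zero
  intro k hk
  have hkn : k < n := Finset.mem_range.mp hk
  have he : n - (k+1) = n - k - 1 := by omega
  have hc1 : ((n-k:ℕ):ℝ) = (n:ℝ) - k := Nat.cast_sub hkn.le
  have hc2 : ((n-k-1:ℕ):ℝ) = (n:ℝ) - k - 1 := by
    rw [show n - k - 1 = n - (k+1) from by omega, Nat.cast_sub (by omega)]
    push_cast; ring
  rw [he, hc1, hc2, hβ, hs, hlam]
  have h := cc_rec hα q n hkn
  linear_combination (t^(n-k-1) : ℝ) * h

lemma integrable_one_sub_rpow {α : ℝ} (hα : -1 < α) :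
    IntervalIntegrable (fun t : ℝ => (1 - t) ^ α) volume 0 1 := by
  have h := (intervalIntegral.intervalIntegrable_rpow' (a := 0) (b := 1) hα).comp_sub_left 1
  simpa using h.symm

lemma integrable_weight_mul {α : ℝ} (hα : -1 < α) {β : ℝ} (hβ : 0 ≤ β) {r : ℝ → ℝ}
    (hr : Continuous r) :
    IntegrableOn (fun t => t ^ β * (1 - t) ^ α * r t) (Set.Ioo (0:ℝ) 1) := by
  have h1' : IntegrableOn (fun t : ℝ => (1 - t) ^ α) (Set.Ioo (0:ℝ) 1) := by
    rw [← integrableOn_Ioc_iff_integrableOn_Ioo]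
    exact (intervalIntegrable_iff_integrableOn_Ioc_of_le (by norm_num)).mp
      (integrable_one_sub_rpow hα)
  obtain ⟨Cr, hCr⟩ := (isCompact_Icc (a := (0:ℝ)) (b := 1)).exists_bound_of_continuousOn
    hr.continuousOn
  have hcont : ContinuousOn (fun t : ℝ => t ^ β * r t) (Set.Ioo (0:ℝ) 1) := by
    refine ContinuousOn.mul (fun x hx => ?_) hr.continuousOn
    exact (Real.continuousAt_rpow_const x β (Or.inl hx.1.ne')).continuousWithinAt
  have hmeas : AEStronglyMeasurable (fun t : ℝ => t ^ β * r t)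
      (volume.restrict (Set.Ioo (0:ℝ) 1)) :=
    hcont.aestronglyMeasurable measurableSet_Ioo
  have hbdd : ∀ᵐ t ∂(volume.restrict (Set.Ioo (0:ℝ) 1)), ‖t ^ β * r t‖ ≤ Cr := by
    refine (ae_restrict_iff' measurableSet_Ioo).mpr (Filter.Eventually.of_forall ?_)
    intro t ht
    have h0 : (0:ℝ) ≤ t ^ β := Real.rpow_nonneg ht.1.le β
    have h1 : t ^ β ≤ 1 := Real.rpow_le_one ht.1.le ht.2.le hβ
    have h2 : ‖r t‖ ≤ Cr := hCr t ⟨ht.1.le, ht.2.le⟩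
    have h3 : (0:ℝ) ≤ Cr := le_trans (norm_nonneg _) h2
    calc ‖t ^ β * r t‖ = t ^ β * ‖r t‖ := by
          rw [norm_mul, Real.norm_of_nonneg h0]
      _ ≤ 1 * Cr := by apply mul_le_mul h1 h2 (norm_nonneg _) zero_le_one
      _ = Cr := one_mul Cr
  have h := h1'.bdd_mul hmeas hbdd
  have hfe : (fun t : ℝ => t ^ β * (1 - t) ^ α * r t)
      = fun t => (t ^ β * r t) * (1 - t) ^ α := by funext t; ring
  rw [hfe]
  exact h

lemma intervalIntegrable_weight_mul {α : ℝ} (hα : -1 < α) {β : ℝ} (hβ : 0 ≤ β) {r : ℝ → ℝ}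
    (hr : Continuous r) :
    IntervalIntegrable (fun t => t ^ β * (1 - t) ^ α * r t) volume 0 1 := by
  rw [intervalIntegrable_iff_integrableOn_Ioc_of_le (by norm_num),
    integrableOn_Ioc_iff_integrableOn_Ioo]
  exact integrable_weight_mul hα hβ hr

lemma ftc0 {α : ℝ} (hα : -1 < α) {β : ℝ} (hβ : 0 ≤ β) (r : Polynomial ℝ) :
    ∫ t in (0:ℝ)..1, t ^ β * (1 - t) ^ α *
      ((β+1) * (1 - t) * r.eval t - (α+1) * t * r.eval t
        + t * (1-t) * r.derivative.eval t) = 0 := by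
  set F : ℝ → ℝ := fun t => t ^ (β+1) * (1 - t) ^ (α+1) * r.eval t with hF
  have hc1 : Continuous fun t : ℝ => t ^ (β+1) :=
    continuous_iff_continuousAt.mpr fun x =>
      Real.continuousAt_rpow_const x _ (Or.inr (by linarith))
  have hc2 : Continuous fun t : ℝ => (1 - t) ^ (α+1) :=
    (continuous_iff_continuousAt.mpr fun x =>
      Real.continuousAt_rpow_const x _ (Or.inr (by linarith))).comp
        (continuous_const.sub continuous_id)
  have hFcont : ContinuousOn F (Set.Icc 0 1) :=
    ((hc1.mul hc2).mul r.continuous_aeval).continuousOn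
  have hFderiv : ∀ t ∈ Set.Ioo (0:ℝ) 1, HasDerivAt F
      (t ^ β * (1 - t) ^ α * ((β+1) * (1 - t) * r.eval t - (α+1) * t * r.eval t
        + t * (1-t) * r.derivative.eval t)) t := by
    intro t ht
    have ht0 : (0:ℝ) < t := ht.1
    have ht1 : (0:ℝ) < 1 - t := by linarith [ht.2]
    have h1 : HasDerivAt (fun t : ℝ => t ^ (β+1)) ((β+1) * t ^ β) t := by
      have h := Real.hasDerivAt_rpow_const (x := t) (p := β+1) (Or.inl ht0.ne')
      simpa [show β + 1 - 1 = β from by ring] using h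
    have h2 : HasDerivAt (fun t : ℝ => (1 - t) ^ (α+1)) (-((α+1) * (1 - t) ^ α)) t := by
      have hin : HasDerivAt (fun t : ℝ => 1 - t) (-1) t := by
        simpa using (hasDerivAt_id t).const_sub 1
      have h := (Real.hasDerivAt_rpow_const (x := 1-t) (p := α+1) (Or.inl ht1.ne')).comp t hin
      simpa [show α + 1 - 1 = α from by ring, Function.comp_def] using h
    have h3 : HasDerivAt (fun t : ℝ => r.eval t) (r.derivative.eval t) t :=
      r.hasDerivAt t
    have h := (h1.mul h2).mul h3
    have heq : ((β+1) * t ^ β * ((1 - t) ^ (α+1)) + t ^ (β+1) * (-((α+1) * (1 - t) ^ α)))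
          * r.eval t + t ^ (β+1) * (1 - t) ^ (α+1) * r.derivative.eval t
        = t ^ β * (1 - t) ^ α * ((β+1) * (1 - t) * r.eval t - (α+1) * t * r.eval t
          + t * (1-t) * r.derivative.eval t) := by
      rw [Real.rpow_add_one ht0.ne', Real.rpow_add_one ht1.ne']
      ring
    simp only [Pi.mul_apply] at h
    rw [heq] at h
    exact h
  have hint : IntervalIntegrable (fun t => t ^ β * (1 - t) ^ α *
      ((β+1) * (1 - t) * r.eval t - (α+1) * t * r.eval t
        + t * (1-t) * r.derivative.eval t)) volume 0 1 := by
    apply intervalIntegrable_weight_mul hα hβ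
    exact ((continuous_const.mul (continuous_const.sub continuous_id)).mul r.continuous_aeval
      |>.sub ((continuous_const.mul continuous_id).mul r.continuous_aeval)).add
      ((continuous_id.mul (continuous_const.sub continuous_id)).mul
        r.derivative.continuous_aeval)
  have h := intervalIntegral.integral_eq_sub_of_hasDerivAt_of_le (by norm_num)
    hFcont hFderiv hint
  rw [h, hF]
  have hz1 : ((1:ℝ) - 1) ^ (α+1) = 0 := by
    rw [sub_self, Real.zero_rpow (by linarith)]
  have hz0 : (0:ℝ) ^ (β+1) = 0 := Real.zero_rpow (by linarith)
  simp [hz1, hz0, Real.zero_rpow (show α + 1 ≠ 0 from by linarith)]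

noncomputable def Jint (α β : ℝ) (r : Polynomial ℝ) : ℝ :=
  ∫ t in (0:ℝ)..1, t ^ β * (1-t) ^ α * r.eval t

lemma Jint_add {α : ℝ} (hα : -1 < α) {β : ℝ} (hβ : 0 ≤ β) (r s : Polynomial ℝ) :
    Jint α β (r + s) = Jint α β r + Jint α β s := by
  unfold Jint
  rw [← intervalIntegral.integral_add (intervalIntegrable_weight_mul hα hβ r.continuous)
    (intervalIntegrable_weight_mul hα hβ s.continuous)]
  apply intervalIntegral.integral_congr
  intro t _
  simp only [eval_add]
  ring

lemma Jint_Cmul (α β : ℝ) (c : ℝ) (r : Polynomial ℝ) :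
    Jint α β (C c * r) = c * Jint α β r := by
  unfold Jint
  rw [← intervalIntegral.integral_const_mul]
  apply intervalIntegral.integral_congr
  intro t _
  simp only [eval_mul, eval_C]
  ring

lemma Jint_bracket {α : ℝ} (hα : -1 < α) {β : ℝ} (hβ : 0 ≤ β) (r : Polynomial ℝ) :
    Jint α β (C (β+1) * ((1-X) * r) - C (α+1) * (X * r) + X*(1-X) * (derivative r)) = 0 := by
  unfold Jint
  refine Eq.trans ?_ (ftc0 hα hβ r)
  apply intervalIntegral.integral_congr
  intro t _
  simp only [eval_add, eval_sub, eval_mul, eval_C, eval_X, eval_one]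
  ring

lemma pow_shift (m : ℕ) (t : ℝ) : (m:ℝ) * (t * t^(m-1)) = (m:ℝ) * t^m := by
  cases m with
  | zero => simp
  | succ k => rw [Nat.add_sub_cancel, pow_succ]; ring

lemma pow_shift' {m : ℕ} (hm : 1 ≤ m) (t : ℝ) : t * t^(m-1) = t^m := by
  cases m with
  | zero => omega
  | succ k => rw [Nat.add_sub_cancel, pow_succ]; ring

lemma relA {α : ℝ} (hα : -1 < α) (q n : ℕ) (hn : 1 ≤ n) (m : ℕ) :
    ((n:ℝ) * ((n:ℝ) + α + ((q:ℝ)+1/2) + 1)) * Jint α ((q:ℝ)+1/2) (X^m * pp α q n)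
      = (m:ℝ) * Jint α ((q:ℝ)+1/2) (X^m * (1-X) * derivative (pp α q n)) := by
  have hβ : (0:ℝ) ≤ (q:ℝ)+1/2 := by positivity
  have hpoly : C (((q:ℝ)+1/2)+1) * ((1-X) * (X^m * derivative (pp α q n)))
        - C (α+1) * (X * (X^m * derivative (pp α q n)))
        + X*(1-X) * (derivative (X^m * derivative (pp α q n)))
      = C (-((n:ℝ) * ((n:ℝ) + α + ((q:ℝ)+1/2) + 1))) * (X^m * pp α q n)
        + C ((m:ℝ)) * (X^m * (1-X) * derivative (pp α q n)) := by
    apply Polynomial.funext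
    intro t
    have hode := pp_ode α hα q n hn t
    have hps := pow_shift m t
    simp only [derivative_mul, derivative_X_pow, eval_add, eval_sub, eval_mul, eval_C,
      eval_X, eval_one, eval_pow, eval_natCast]
    linear_combination (t^m) * hode + ((1-t) * (pp α q n).derivative.eval t) * hps
  have h := Jint_bracket hα hβ (X^m * derivative (pp α q n))
  rw [hpoly, Jint_add hα hβ, Jint_Cmul, Jint_Cmul] at h
  linarith

lemma relB {α : ℝ} (hα : -1 < α) (q n : ℕ) (hn : 1 ≤ n) {m : ℕ} (hm : 1 ≤ m) :
    (((q:ℝ)+1/2) + m) * Jint α ((q:ℝ)+1/2) (X^(m-1) * pp α q n)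
      - ((m:ℝ) + α + ((q:ℝ)+1/2) + 1) * Jint α ((q:ℝ)+1/2) (X^m * pp α q n)
      + Jint α ((q:ℝ)+1/2) (X^m * (1-X) * derivative (pp α q n)) = 0 := by
  have hβ : (0:ℝ) ≤ (q:ℝ)+1/2 := by positivity
  have hcast : ((m-1:ℕ):ℝ) = (m:ℝ) - 1 := by
    rw [Nat.cast_sub hm]; push_cast; ring
  have hpoly : C (((q:ℝ)+1/2)+1) * ((1-X) * (X^(m-1) * pp α q n))
        - C (α+1) * (X * (X^(m-1) * pp α q n))
        + X*(1-X) * (derivative (X^(m-1) * pp α q n))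
      = C (((q:ℝ)+1/2) + m) * (X^(m-1) * pp α q n)
        + C (-((m:ℝ) + α + ((q:ℝ)+1/2) + 1)) * (X^m * pp α q n)
        + C 1 * (X^m * (1-X) * derivative (pp α q n)) := by
    apply Polynomial.funext
    intro t
    have hps := pow_shift (m-1) t
    have hts := pow_shift' hm t
    simp only [derivative_mul, derivative_X_pow, eval_add, eval_sub, eval_mul, eval_C,
      eval_X, eval_one, eval_pow, eval_natCast]
    rw [hcast] at hps ⊢
    linear_combination ((1-t) * (pp α q n).eval t) * hps
      + ((1 - t) * (pp α q n).derivative.eval t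
          - ((m:ℝ) + α + ((q:ℝ)+1/2) + 1) * (pp α q n).eval t) * hts
  have h := Jint_bracket hα hβ (X^(m-1) * pp α q n)
  rw [hpoly, Jint_add hα hβ, Jint_add hα hβ, Jint_Cmul, Jint_Cmul, Jint_Cmul] at h
  linarith

lemma moments_zero {α : ℝ} (hα : -1 < α) (q n : ℕ) (hn : 1 ≤ n) :
    ∀ m, m < n → Jint α ((q:ℝ)+1/2) (X^m * pp α q n) = 0 := by
  intro m
  induction m with
  | zero =>
    intro _
    have h := relA hα q n hn 0
    have h1 : (1:ℝ) ≤ n := by exact_mod_cast hn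
    have h3 : (0:ℝ) ≤ q := Nat.cast_nonneg q
    have hlam : (0:ℝ) < (n:ℝ) * ((n:ℝ) + α + ((q:ℝ)+1/2) + 1) := by nlinarith
    simp only [Nat.cast_zero, zero_mul] at h
    exact (mul_eq_zero.mp h).resolve_left hlam.ne'
  | succ m ih =>
    intro hmn
    have hprev := ih (by omega)
    have hB := relB hα q n hn (m := m+1) (by omega)
    rw [Nat.add_sub_cancel, hprev] at hB
    have hA := relA hα q n hn (m+1)
    have h1 : (1:ℝ) ≤ n := by exact_mod_cast hn
    have h2 : (m:ℝ)+1 < n := by exact_mod_cast hmn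
    have h3 : (0:ℝ) ≤ q := Nat.cast_nonneg q
    push_cast at hA hB
    have hfac : (0:ℝ) < ((n:ℝ) * ((n:ℝ) + α + ((q:ℝ)+1/2) + 1))
        - ((m:ℝ)+1)*(((m:ℝ)+1) + α + ((q:ℝ)+1/2) + 1) := by
      have e : ((n:ℝ) * ((n:ℝ) + α + ((q:ℝ)+1/2) + 1))
          - ((m:ℝ)+1)*(((m:ℝ)+1) + α + ((q:ℝ)+1/2) + 1)
          = ((n:ℝ) - ((m:ℝ)+1)) * ((n:ℝ) + ((m:ℝ)+1) + α + ((q:ℝ)+1/2) + 1) := by ring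
      rw [e]
      apply mul_pos
      · linarith
      · linarith
    have key : (((n:ℝ) * ((n:ℝ) + α + ((q:ℝ)+1/2) + 1))
          - ((m:ℝ)+1)*(((m:ℝ)+1) + α + ((q:ℝ)+1/2) + 1))
        * Jint α ((q:ℝ)+1/2) (X^(m+1) * pp α q n) = 0 := by
      linear_combination hA + ((m:ℝ)+1) * hB
    exact (mul_eq_zero.mp key).resolve_left hfac.ne'

lemma Peven_eq (α : ℝ) (q n : ℕ) (x : ℝ) : Peven α q n x = (pp α q n).eval (x^2) := by
  rw [pp_eval, Peven]
  apply Finset.sum_congr rfl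
  intro k hk
  have hk' : k ≤ n := by
    have := Finset.mem_range.mp hk; omega
  rw [← pow_mul, show 2*(n-k) = 2*n-2*k from by omega]
  rfl

lemma integrable_weight_mulL {α : ℝ} (hα : -1 < α) {r : ℝ → ℝ}
    (hr : ContinuousOn r (Set.Icc (0:ℝ) 1)) :
    IntegrableOn (fun t => (1 - t) ^ α * r t) (Set.Ioo (0:ℝ) 1) := by
  have h1' : IntegrableOn (fun t : ℝ => (1 - t) ^ α) (Set.Ioo (0:ℝ) 1) := by
    rw [← integrableOn_Ioc_iff_integrableOn_Ioo]
    exact (intervalIntegrable_iff_integrableOn_Ioc_of_le (by norm_num)).mp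
      (integrable_one_sub_rpow hα)
  obtain ⟨Cr, hCr⟩ := (isCompact_Icc (a := (0:ℝ)) (b := 1)).exists_bound_of_continuousOn hr
  have hmeas : AEStronglyMeasurable r (volume.restrict (Set.Ioo (0:ℝ) 1)) :=
    (hr.mono Set.Ioo_subset_Icc_self).aestronglyMeasurable measurableSet_Ioo
  have hbdd : ∀ᵐ t ∂(volume.restrict (Set.Ioo (0:ℝ) 1)), ‖r t‖ ≤ Cr := by
    refine (ae_restrict_iff' measurableSet_Ioo).mpr (Filter.Eventually.of_forall ?_)
    intro t ht
    exact hCr t ⟨ht.1.le, ht.2.le⟩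
  have h := h1'.bdd_mul hmeas hbdd
  have hfe : (fun t : ℝ => (1 - t) ^ α * r t) = fun t => r t * (1 - t) ^ α := by
    funext t; ring
  rw [hfe]
  exact h

lemma integrable_weight_mulR {α : ℝ} (hα : -1 < α) {r : ℝ → ℝ}
    (hr : ContinuousOn r (Set.Icc (-1:ℝ) 0)) :
    IntegrableOn (fun t => (1 + t) ^ α * r t) (Set.Ioo (-1:ℝ) 0) := by
  have h1 : IntervalIntegrable (fun t : ℝ => (1 + t) ^ α) volume (-1) 0 := by
    have h := (intervalIntegral.intervalIntegrable_rpow' (a := 0) (b := 1) hα).comp_add_right 1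
    norm_num at h
    have he : (fun t : ℝ => (t + 1) ^ α) = fun t : ℝ => (1 + t) ^ α := by
      funext t; rw [add_comm]
    rwa [he] at h
  have h1' : IntegrableOn (fun t : ℝ => (1 + t) ^ α) (Set.Ioo (-1:ℝ) 0) := by
    rw [← integrableOn_Ioc_iff_integrableOn_Ioo]
    exact (intervalIntegrable_iff_integrableOn_Ioc_of_le (by norm_num)).mp h1
  obtain ⟨Cr, hCr⟩ := (isCompact_Icc (a := (-1:ℝ)) (b := 0)).exists_bound_of_continuousOn hr
  have hmeas : AEStronglyMeasurable r (volume.restrict (Set.Ioo (-1:ℝ) 0)) :=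
    (hr.mono Set.Ioo_subset_Icc_self).aestronglyMeasurable measurableSet_Ioo
  have hbdd : ∀ᵐ t ∂(volume.restrict (Set.Ioo (-1:ℝ) 0)), ‖r t‖ ≤ Cr := by
    refine (ae_restrict_iff' measurableSet_Ioo).mpr (Filter.Eventually.of_forall ?_)
    intro t ht
    exact hCr t ⟨ht.1.le, ht.2.le⟩
  have h := h1'.bdd_mul hmeas hbdd
  have hfe : (fun t : ℝ => (1 + t) ^ α * r t) = fun t => r t * (1 + t) ^ α := by
    funext t; ring
  rw [hfe]
  exact h

lemma integrableOn_xweight {α : ℝ} (hα : -1 < α) (q : ℕ) {g : ℝ → ℝ} (hg : Continuous g) :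
    IntegrableOn (fun x => |x| ^ (2*q+2) * (1 - x^2) ^ α * g x) (Set.Ioo (-1:ℝ) 1) := by
  rw [← Set.Ioo_union_Ico_eq_Ioo (show (-1:ℝ) < 0 by norm_num) (show (0:ℝ) ≤ 1 by norm_num)]
  apply MeasureTheory.IntegrableOn.union
  · -- on Ioo (-1) 0
    have hcont : ContinuousOn (fun x : ℝ => |x| ^ (2*q+2) * (1 - x) ^ α * g x)
        (Set.Icc (-1:ℝ) 0) := by
      refine (ContinuousOn.mul (ContinuousOn.mul ?_ ?_) hg.continuousOn)
      · exact (continuous_abs.pow _).continuousOn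
      · intro x hx
        have : (1:ℝ) - x ≠ 0 := by
          have := hx.2; intro h'; nlinarith
        exact ((Real.continuousAt_rpow_const (1-x) α (Or.inl this)).comp
          (by fun_prop)).continuousWithinAt
    have h := integrable_weight_mulR hα hcont
    apply h.congr_fun ?_ measurableSet_Ioo
    intro x hx
    have h1x : (0:ℝ) < 1 + x := by linarith [hx.1]
    have h2x : (0:ℝ) < 1 - x := by linarith [hx.2]
    show (1 + x) ^ α * (|x| ^ (2*q+2) * (1 - x) ^ α * g x)
      = |x| ^ (2*q+2) * (1 - x^2) ^ α * g x
    rw [show (1 : ℝ) - x^2 = (1+x)*(1-x) from by ring, Real.mul_rpow h1x.le h2x.le]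
    ring
  · -- on Ico 0 1
    rw [integrableOn_Ico_iff_integrableOn_Ioo]
    have hcont : ContinuousOn (fun x : ℝ => |x| ^ (2*q+2) * (1 + x) ^ α * g x)
        (Set.Icc (0:ℝ) 1) := by
      refine (ContinuousOn.mul (ContinuousOn.mul ?_ ?_) hg.continuousOn)
      · exact (continuous_abs.pow _).continuousOn
      · intro x hx
        have : (1:ℝ) + x ≠ 0 := by
          have := hx.1; intro h'; nlinarith
        exact ((Real.continuousAt_rpow_const (1+x) α (Or.inl this)).comp
          (by fun_prop)).continuousWithinAt
    have h := integrable_weight_mulL hα hcont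
    apply h.congr_fun ?_ measurableSet_Ioo
    intro x hx
    have h1x : (0:ℝ) < 1 + x := by linarith [hx.1]
    have h2x : (0:ℝ) < 1 - x := by linarith [hx.2]
    show (1 - x) ^ α * (|x| ^ (2*q+2) * (1 + x) ^ α * g x)
      = |x| ^ (2*q+2) * (1 - x^2) ^ α * g x
    rw [show (1 : ℝ) - x^2 = (1-x)*(1+x) from by ring, Real.mul_rpow h2x.le h1x.le]
    ring

lemma intervalIntegrable_xweight {α : ℝ} (hα : -1 < α) (q : ℕ) {g : ℝ → ℝ}
    (hg : Continuous g) :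
    IntervalIntegrable (fun x => |x| ^ (2*q+2) * (1 - x^2) ^ α * g x) volume (-1) 1 := by
  rw [intervalIntegrable_iff_integrableOn_Ioc_of_le (by norm_num),
    integrableOn_Ioc_iff_integrableOn_Ioo]
  exact integrableOn_xweight hα q hg

lemma uIcc_sub1 : Set.uIcc (-1:ℝ) 0 ⊆ Set.uIcc (-1:ℝ) 1 := by
  rw [Set.uIcc_of_le (by norm_num), Set.uIcc_of_le (by norm_num)]
  exact Set.Icc_subset_Icc (le_refl _) (by norm_num)

lemma uIcc_sub2 : Set.uIcc (0:ℝ) 1 ⊆ Set.uIcc (-1:ℝ) 1 := by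
  rw [Set.uIcc_of_le (by norm_num), Set.uIcc_of_le (by norm_num)]
  exact Set.Icc_subset_Icc (by norm_num) (le_refl _)

lemma Peven_orth {α : ℝ} (hα : -1 < α) (q n : ℕ) (hn : 1 ≤ n) :
    ∀ k, k < 2*n →
      ∫ x in (-1:ℝ)..1, |x| ^ (2*q+2) * (1 - x^2) ^ α * x^k * Peven α q n x = 0 := by
  intro k hk
  set f : ℝ → ℝ :=
    fun x => |x| ^ (2*q+2) * (1 - x^2) ^ α * (x^k * (pp α q n).eval (x^2)) with hf
  have hgcont : Continuous fun x : ℝ => x^k * (pp α q n).eval (x^2) :=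
    (continuous_pow k).mul ((pp α q n).continuous.comp (continuous_pow 2))
  have hfint : IntervalIntegrable f volume (-1) 1 :=
    intervalIntegrable_xweight hα q hgcont
  have hgoal : (∫ x in (-1:ℝ)..1, |x| ^ (2*q+2) * (1 - x^2) ^ α * x^k * Peven α q n x)
      = ∫ x in (-1:ℝ)..1, f x := by
    apply intervalIntegral.integral_congr
    intro x _
    show |x| ^ (2*q+2) * (1 - x^2) ^ α * x^k * Peven α q n x
      = |x| ^ (2*q+2) * (1 - x^2) ^ α * (x^k * (pp α q n).eval (x^2))
    rw [Peven_eq]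
    ring
  rw [hgoal]
  have h1 : IntervalIntegrable f volume (-1) 0 := hfint.mono_set uIcc_sub1
  have h2 : IntervalIntegrable f volume 0 1 := hfint.mono_set uIcc_sub2
  have hadd := intervalIntegral.integral_add_adjacent_intervals h1 h2
  have hneg : (∫ x in (0:ℝ)..1, f (-x)) = ∫ x in (-1:ℝ)..0, f x := by
    have := intervalIntegral.integral_comp_neg (a := (0:ℝ)) (b := 1) (f := f)
    simpa using this
  rcases Nat.even_or_odd k with he | ho
  · -- even case
    obtain ⟨m, hm⟩ := he
    have hmn : m < n := by omega
    have heven : ∀ x, f (-x) = f x := by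
      intro x
      rw [hf]
      simp only [abs_neg, neg_sq]
      rw [Even.neg_pow ⟨m, hm⟩]
    have h2int : ∫ x in (-1:ℝ)..1, f x = 2 * ∫ x in (0:ℝ)..1, f x := by
      rw [← hadd, ← hneg]
      rw [intervalIntegral.integral_congr (g := f) (fun x _ => heven x)]
      ring
    rw [h2int]
    -- now the substitution t = x^2
    have hJ := moments_zero hα q n hn m hmn
    set g : ℝ → ℝ :=
      fun t => t^((q:ℝ)+1/2) * (1-t)^α * (X^m * pp α q n).eval t with hg
    have hderiv : ∀ x ∈ Set.Ioo (0:ℝ) 1,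
        HasDerivWithinAt (fun y : ℝ => y^2) (2*x) (Set.Ioo (0:ℝ) 1) x := by
      intro x _
      have h := (hasDerivAt_pow 2 x).hasDerivWithinAt (s := Set.Ioo (0:ℝ) 1)
      norm_num at h
      exact h
    have hinj : Set.InjOn (fun y : ℝ => y^2) (Set.Ioo 0 1) := by
      intro a ha b hb hab
      have habs : |a| = |b| := by
        rw [← Real.sqrt_sq_eq_abs, ← Real.sqrt_sq_eq_abs]
        simp only [] at hab
        rw [hab]
      rwa [abs_of_pos ha.1, abs_of_pos hb.1] at habs
    have himg : (fun y : ℝ => y^2) '' (Set.Ioo 0 1) = Set.Ioo (0:ℝ) 1 := by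
      ext y
      constructor
      · rintro ⟨x, hx, rfl⟩
        simp only [Set.mem_Ioo]
        constructor <;> nlinarith [hx.1, hx.2]
      · intro hy
        refine ⟨Real.sqrt y, ⟨Real.sqrt_pos.mpr hy.1, ?_⟩, Real.sq_sqrt hy.1.le⟩
        rw [show (1:ℝ) = Real.sqrt 1 from (Real.sqrt_one).symm]
        exact Real.sqrt_lt_sqrt hy.1.le hy.2
    have hcv := MeasureTheory.integral_image_eq_integral_abs_deriv_smul
      measurableSet_Ioo hderiv hinj g
    rw [himg] at hcv
    have hptwise : ∀ x ∈ Set.Ioo (0:ℝ) 1, |2*x| • g (x^2) = 2 * f x := by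
      intro x hx
      have hx0 : (0:ℝ) < x := hx.1
      have hx2 : (x^2:ℝ)^((q:ℝ)+1/2) = x^(2*q+1) := by
        rw [← Real.rpow_natCast x 2, ← Real.rpow_mul hx0.le,
          show (((2:ℕ)):ℝ) * ((q:ℝ)+1/2) = (((2*q+1 : ℕ)):ℝ) from by push_cast; ring,
          Real.rpow_natCast]
      show |2*x| • ((x^2)^((q:ℝ)+1/2) * (1-x^2)^α * (X^m * pp α q n).eval (x^2))
        = 2 * (|x| ^ (2*q+2) * (1 - x^2) ^ α * (x^k * (pp α q n).eval (x^2)))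
      rw [smul_eq_mul, abs_of_pos (show (0:ℝ) < 2*x by linarith), hx2]
      simp only [eval_mul, eval_pow, eval_X]
      rw [abs_of_pos hx0, show k = 2*m from by omega, ← pow_mul x 2 m,
        show 2*q+2 = (2*q+1)+1 from rfl, pow_succ]
      ring
    have hstep : (∫ t in Set.Ioo (0:ℝ) 1, g t) = ∫ x in Set.Ioo (0:ℝ) 1, 2 * f x := by
      rw [hcv]
      exact MeasureTheory.setIntegral_congr_fun measurableSet_Ioo hptwise
    have hJg : (∫ t in (0:ℝ)..1, g t) = 0 := by
      have : Jint α ((q:ℝ)+1/2) (X^m * pp α q n) = ∫ t in (0:ℝ)..1, g t := by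
        unfold Jint; rfl
      rw [← this]; exact hJ
    have hfIoo : (∫ x in (0:ℝ)..1, f x) = ∫ x in Set.Ioo (0:ℝ) 1, f x := by
      rw [intervalIntegral.integral_of_le (by norm_num),
        MeasureTheory.integral_Ioc_eq_integral_Ioo]
    have hgIoo : (∫ t in (0:ℝ)..1, g t) = ∫ t in Set.Ioo (0:ℝ) 1, g t := by
      rw [intervalIntegral.integral_of_le (by norm_num),
        MeasureTheory.integral_Ioc_eq_integral_Ioo]
    have h2f : (∫ x in Set.Ioo (0:ℝ) 1, 2 * f x) = 2 * ∫ x in Set.Ioo (0:ℝ) 1, f x :=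
      MeasureTheory.integral_const_mul 2 f
    rw [hfIoo, ← h2f, ← hstep, ← hgIoo, hJg]
  · -- odd case
    have hodd : ∀ x, f (-x) = - f x := by
      intro x
      rw [hf]
      simp only [abs_neg, neg_sq]
      rw [Odd.neg_pow ho]
      ring
    have : (∫ x in (0:ℝ)..1, f (-x)) = - ∫ x in (0:ℝ)..1, f x := by
      rw [intervalIntegral.integral_congr (g := fun x => - f x) (fun x _ => hodd x)]
      exact intervalIntegral.integral_neg
    rw [← hadd, ← hneg, this]
    ring

lemma pp_coeff_n (α : ℝ) (q n : ℕ) : (pp α q n).coeff n = 1 := by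
  rw [pp, finset_sum_coeff]
  rw [Finset.sum_eq_single 0]
  · simp [coeff_C_mul, coeff_X_pow, cc_zero]
  · intro k hk hk0
    have hkn : k ≤ n := by have := Finset.mem_range.mp hk; omega
    have hne : ¬ (n = n - k) := by omega
    simp [coeff_C_mul, coeff_X_pow, hne]
  · intro h; exact absurd (Finset.mem_range.mpr (by omega)) h

lemma pp_natDegree_le (α : ℝ) (q n : ℕ) : (pp α q n).natDegree ≤ n := by
  apply Polynomial.natDegree_sum_le_of_forall_le
  intro k hk
  refine le_trans (Polynomial.natDegree_C_mul_le _ _) ?_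
  rw [Polynomial.natDegree_X_pow]
  omega

lemma pp_monic (α : ℝ) (q n : ℕ) : (pp α q n).Monic :=
  monic_of_natDegree_le_of_coeff_eq_one n (pp_natDegree_le α q n) (pp_coeff_n α q n)

lemma pp_natDegree (α : ℝ) (q n : ℕ) : (pp α q n).natDegree = n :=
  le_antisymm (pp_natDegree_le α q n)
    (le_natDegree_of_ne_zero (by rw [pp_coeff_n]; exact one_ne_zero))

end GGaux

open GGaux in
/-- The monic polynomial of degree `2n` orthogonal to lower powers with respect to the
generalized Gegenbauer weight `|x|^{2q+2}(1−x²)^α` is given by the explicit hypergeometric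
sum `Peven α q n`. -/
theorem gg_explicit_formula (α : ℝ) (hα : -1 < α) (q : ℕ) (n : ℕ) (hn : 1 ≤ n)
    (G : Polynomial ℝ) (hGm : G.Monic) (hGd : G.natDegree = 2 * n)
    (hG : ∀ k : ℕ, k < 2 * n →
      ∫ x in (-1 : ℝ)..1, |x| ^ (2 * q + 2) * (1 - x ^ 2) ^ α * x ^ k * G.eval x = 0) :
    ∀ x : ℝ, G.eval x = Peven α q n x := by
  classical
  set PP : Polynomial ℝ := (pp α q n).comp (X^2) with hPPdef
  have hPPeval : ∀ x : ℝ, PP.eval x = (pp α q n).eval (x^2) := by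
    intro x; rw [hPPdef, eval_comp]; simp
  have hppM : (pp α q n).Monic := pp_monic α q n
  have hPPM : PP.Monic := by
    rw [hPPdef]
    exact hppM.comp (monic_X_pow 2) (by rw [natDegree_X_pow]; norm_num)
  have hPPdeg : PP.natDegree = 2*n := by
    rw [hPPdef, natDegree_comp, pp_natDegree, natDegree_X_pow]; ring
  suffices hDG : G = PP by
    intro x
    rw [hDG, hPPeval, Peven_eq]
  by_contra hne
  set D : Polynomial ℝ := G - PP with hDdef
  have hD0 : D ≠ 0 := fun h => hne (by rwa [hDdef, sub_eq_zero] at h)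
  have hDdeg : D.natDegree < 2*n := by
    have hdeq : G.degree = PP.degree := by
      rw [degree_eq_natDegree hGm.ne_zero, degree_eq_natDegree hPPM.ne_zero, hGd, hPPdeg]
    have h := degree_sub_lt hdeq hGm.ne_zero
      (by rw [hGm.leadingCoeff, hPPM.leadingCoeff])
    rw [natDegree_lt_iff_degree_lt hD0]
    calc D.degree < G.degree := h
      _ = ((2*n : ℕ) : WithBot ℕ) := by rw [degree_eq_natDegree hGm.ne_zero, hGd]
  have horthD : ∀ k, k < 2*n → ∫ x in (-1:ℝ)..1,
      |x| ^ (2*q+2) * (1 - x^2) ^ α * (x^k * D.eval x) = 0 := by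
    intro k hk
    have hIG : IntervalIntegrable
        (fun x : ℝ => |x| ^ (2*q+2) * (1 - x^2) ^ α * (x^k * G.eval x)) volume (-1) 1 :=
      intervalIntegrable_xweight hα q ((continuous_pow k).mul G.continuous)
    have hIP : IntervalIntegrable
        (fun x : ℝ => |x| ^ (2*q+2) * (1 - x^2) ^ α * (x^k * PP.eval x)) volume (-1) 1 :=
      intervalIntegrable_xweight hα q ((continuous_pow k).mul PP.continuous)
    have hsub := intervalIntegral.integral_sub hIG hIP
    have hGk : ∫ x in (-1:ℝ)..1, |x| ^ (2*q+2) * (1 - x^2) ^ α * (x^k * G.eval x) = 0 := by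
      rw [← hG k hk]
      apply intervalIntegral.integral_congr; intro x _
      show |x| ^ (2*q+2) * (1 - x^2) ^ α * (x^k * G.eval x)
        = |x| ^ (2*q+2) * (1 - x^2) ^ α * x^k * G.eval x
      ring
    have hPk : ∫ x in (-1:ℝ)..1, |x| ^ (2*q+2) * (1 - x^2) ^ α * (x^k * PP.eval x) = 0 := by
      rw [← Peven_orth hα q n hn k hk]
      apply intervalIntegral.integral_congr; intro x _
      show |x| ^ (2*q+2) * (1 - x^2) ^ α * (x^k * PP.eval x)
        = |x| ^ (2*q+2) * (1 - x^2) ^ α * x^k * Peven α q n x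
      rw [hPPeval, Peven_eq]; ring
    have hfe : (fun x : ℝ => |x| ^ (2*q+2) * (1 - x^2) ^ α * (x^k * D.eval x))
        = fun x : ℝ => |x| ^ (2*q+2) * (1 - x^2) ^ α * (x^k * G.eval x)
          - |x| ^ (2*q+2) * (1 - x^2) ^ α * (x^k * PP.eval x) := by
      funext x; rw [hDdef]; simp only [eval_sub]; ring
    rw [hfe, hsub, hGk, hPk, sub_zero]
  have hIsq : ∀ k : ℕ, IntervalIntegrable (fun x : ℝ =>
      D.coeff k * (|x| ^ (2*q+2) * (1 - x^2) ^ α * (x^k * D.eval x))) volume (-1) 1 :=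
    fun k => (intervalIntegrable_xweight hα q ((continuous_pow k).mul D.continuous)).const_mul _
  have hsq0 : ∫ x in (-1:ℝ)..1, |x| ^ (2*q+2) * (1 - x^2) ^ α * (D.eval x)^2 = 0 := by
    have hrw : (fun x : ℝ => |x| ^ (2*q+2) * (1 - x^2) ^ α * (D.eval x)^2)
        = fun x : ℝ => ∑ k ∈ Finset.range (2*n),
            D.coeff k * (|x| ^ (2*q+2) * (1 - x^2) ^ α * (x^k * D.eval x)) := by
      funext x
      have he := Polynomial.eval_eq_sum_range' hDdeg x
      calc |x| ^ (2*q+2) * (1 - x^2) ^ α * (D.eval x)^2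
          = |x| ^ (2*q+2) * (1 - x^2) ^ α * (D.eval x * D.eval x) := by ring
        _ = |x| ^ (2*q+2) * (1 - x^2) ^ α
            * ((∑ k ∈ Finset.range (2*n), D.coeff k * x^k) * D.eval x) := by rw [← he]
        _ = _ := by
            rw [Finset.sum_mul, Finset.mul_sum]
            apply Finset.sum_congr rfl; intro k _; ring
    rw [hrw, intervalIntegral.integral_finset_sum (fun k _ => hIsq k)]
    apply Finset.sum_eq_zero
    intro k hkr
    rw [intervalIntegral.integral_const_mul, horthD k (Finset.mem_range.mp hkr), mul_zero]
  have hIoo0 : ∫ x in Set.Ioo (-1:ℝ) 1, |x| ^ (2*q+2) * (1 - x^2) ^ α * (D.eval x)^2 = 0 := by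
    rw [← MeasureTheory.integral_Ioc_eq_integral_Ioo,
      ← intervalIntegral.integral_of_le (by norm_num : (-1:ℝ) ≤ 1)]
    exact hsq0
  have hnn : 0 ≤ᵐ[volume.restrict (Set.Ioo (-1:ℝ) 1)]
      fun x => |x| ^ (2*q+2) * (1 - x^2) ^ α * (D.eval x)^2 := by
    refine (ae_restrict_iff' measurableSet_Ioo).mpr (Filter.Eventually.of_forall ?_)
    intro x hx
    have h1 : (0:ℝ) ≤ 1 - x^2 := by nlinarith [hx.1, hx.2]
    have h2 : (0:ℝ) ≤ (1 - x^2) ^ α := Real.rpow_nonneg h1 α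
    positivity
  have hInt : IntegrableOn (fun x => |x| ^ (2*q+2) * (1 - x^2) ^ α * (D.eval x)^2)
      (Set.Ioo (-1:ℝ) 1) :=
    integrableOn_xweight hα q (D.continuous.pow 2)
  have hz := (MeasureTheory.setIntegral_eq_zero_iff_of_nonneg_ae hnn hInt).mp hIoo0
  set S : Set ℝ := {x | D.IsRoot x} ∪ {0} with hSdef
  have hSfin : S.Finite :=
    (Polynomial.finite_setOf_isRoot hD0).union (Set.finite_singleton 0)
  have hmem : ∀ᵐ x ∂(volume.restrict (Set.Ioo (-1:ℝ) 1)), x ∈ S := by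
    filter_upwards [hz, MeasureTheory.ae_restrict_mem measurableSet_Ioo] with x hx1 hx2
    by_cases hx0 : x = 0
    · exact Or.inr hx0
    · left
      have hw1 : (0:ℝ) < |x| ^ (2*q+2) := pow_pos (abs_pos.mpr hx0) _
      have hw2 : (0:ℝ) < (1 - x^2) ^ α :=
        Real.rpow_pos_of_pos (by nlinarith [hx2.1, hx2.2]) α
      have hx1' : |x| ^ (2*q+2) * (1 - x^2) ^ α * (D.eval x)^2 = 0 := hx1
      have hsq : (D.eval x)^2 = 0 := by
        by_contra h
        exact (mul_ne_zero (mul_ne_zero hw1.ne' hw2.ne') h) hx1'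
      have : D.eval x = 0 := by
        exact pow_eq_zero_iff (by norm_num) |>.mp hsq
      exact this
  have hcompl : (volume.restrict (Set.Ioo (-1:ℝ) 1)) Sᶜ = 0 := by
    have := MeasureTheory.ae_iff.mp hmem
    exact this
  have hSmeas : MeasurableSet S := hSfin.measurableSet
  have hSrestrict : (volume.restrict (Set.Ioo (-1:ℝ) 1)) S = 0 := by
    rw [MeasureTheory.Measure.restrict_apply hSmeas]
    exact le_antisymm ((measure_mono Set.inter_subset_left).trans_eq
      (hSfin.measure_zero volume)) zero_le
  have htot : (volume.restrict (Set.Ioo (-1:ℝ) 1)) Set.univ = ENNReal.ofReal 2 := by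
    rw [MeasureTheory.Measure.restrict_apply_univ, Real.volume_Ioo]; norm_num
  have hle : (volume.restrict (Set.Ioo (-1:ℝ) 1)) Set.univ ≤ 0 := by
    calc (volume.restrict (Set.Ioo (-1:ℝ) 1)) Set.univ
        = (volume.restrict (Set.Ioo (-1:ℝ) 1)) (S ∪ Sᶜ) := by rw [Set.union_compl_self]
      _ ≤ (volume.restrict (Set.Ioo (-1:ℝ) 1)) S
          + (volume.restrict (Set.Ioo (-1:ℝ) 1)) Sᶜ := measure_union_le _ _
      _ = 0 := by rw [hSrestrict, hcompl, add_zero]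
  rw [htot] at hle
  simp at hle
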